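/- For every λ ∈ [0,1] the function h : [0,1] → ℝ defined by h(ℓ) = ∫₀^ℓ g(z)dz + ∫_ℓ^λ (1−g(z))dz + (1−λ+ℓ)(1−g(ℓ)) for ℓ ∈ [0,λ), and h(ℓ) = ∫₀^ℓ g(z)dz + (1−g(ℓ)) for ℓ ∈ [λ,1], where g(z) = e^{λ−1}(z+1−λ) for z ∈ [0,λ) and g(z) = e^{z−1} for z ∈ [λ,1], is constant on [0,1] with value 1 − (1 − λ + λ²/2)·e^{λ−1}. -/

import Mathlib

lemma lin_int (A B a b : ℝ) : ∫ z in A..B, (a*z + b) = a*(B^2 - A^2)/2 + b*(B-A) := by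
  rw [intervalIntegral.integral_add (show IntervalIntegrable (fun z : ℝ => a*z) MeasureTheory.volume A B from (continuous_const.mul continuous_id').intervalIntegrable _ _)
    (intervalIntegrable_const), intervalIntegral.integral_const_mul]
  simp
  ring

lemma exp_int (A B : ℝ) : ∫ z in A..B, Real.exp (z - 1) = Real.exp (B-1) - Real.exp (A-1) := by
  have := intervalIntegral.integral_comp_sub_right (a := A) (b := B) (fun x => Real.exp x) 1
  rw [this, integral_exp]

theorem stmt_16 (l : ℝ) (hl : l ∈ Set.Icc (0 : ℝ) 1)
    (g h : ℝ → ℝ)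
    (hg : ∀ z, g z = if z < l then Real.exp (l - 1) * (z + 1 - l) else Real.exp (z - 1))
    (hh : ∀ t, h t =
      if t < l then
        (∫ z in (0 : ℝ)..t, g z) + (∫ z in t..l, (1 - g z)) + (1 - l + t) * (1 - g t)
      else (∫ z in (0 : ℝ)..t, g z) + (1 - g t)) :
    ∀ t ∈ Set.Icc (0 : ℝ) 1, h t = 1 - (1 - l + l ^ 2 / 2) * Real.exp (l - 1) := by
  obtain ⟨hl0, hl1⟩ := hl
  set E := Real.exp (l - 1) with hE
  -- g agrees with the linear formula on z ≤ l
  have hglin : ∀ z, z ≤ l → g z = E * z + E * (1 - l) := by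
    intro z hz
    rw [hg]
    rcases lt_or_eq_of_le hz with h' | h'
    · rw [if_pos h']; ring
    · subst h'; rw [if_neg (lt_irrefl _)]; ring
  have hgexp : ∀ z, l ≤ z → g z = Real.exp (z - 1) := by
    intro z hz
    rw [hg]
    rcases lt_or_eq_of_le hz with h' | h'
    · rw [if_neg (not_lt.mpr hz)]
    · subst h'; rw [if_neg (lt_irrefl _)]
  -- integral of g on [0,t] for t ≤ l
  have int1 : ∀ t, 0 ≤ t → t ≤ l → (∫ z in (0:ℝ)..t, g z) = E*(t^2-0^2)/2 + (E*(1-l))*(t-0) := by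
    intro t ht0 htl
    rw [intervalIntegral.integral_congr (g := fun z => E*z + E*(1-l)) ?_, lin_int]
    intro z hz
    rw [Set.uIcc_of_le ht0] at hz
    exact hglin z (le_trans hz.2 htl)
  -- integral of (1-g) on [t,l] for t ≤ l
  have int2 : ∀ t, 0 ≤ t → t ≤ l → (∫ z in t..l, (1 - g z)) =
      (-E)*(l^2-t^2)/2 + (1 - E*(1-l))*(l-t) := by
    intro t ht0 htl
    rw [intervalIntegral.integral_congr (g := fun z => (-E)*z + (1 - E*(1-l))) ?_, lin_int]
    intro z hz
    rw [Set.uIcc_of_le htl] at hz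
    have := hglin z hz.2
    simp only [this]; ring
  intro t ht
  obtain ⟨ht0, ht1⟩ := ht
  rw [hh]
  by_cases hcase : t < l
  · rw [if_pos hcase, int1 t ht0 hcase.le, int2 t ht0 hcase.le,
      hglin t hcase.le]
    ring
  · push_neg at hcase
    rw [if_neg (not_lt.mpr hcase)]
    have hgG : g = fun z => if z ≤ l then E*z + E*(1-l) else Real.exp (z-1) := by
      funext z
      by_cases h : z ≤ l
      · rw [if_pos h, hglin z h]
      · rw [if_neg h, hgexp z (le_of_not_ge h)]
    have hc : Continuous g := by
      rw [hgG]
      exact Continuous.if_le ((continuous_const.mul continuous_id').add continuous_const)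
        (Real.continuous_exp.comp (continuous_id.sub continuous_const))
        continuous_id continuous_const
        (fun x hx => by subst hx; rw [hE]; ring)
    have hsplit : (∫ z in (0:ℝ)..t, g z) =
        (∫ z in (0:ℝ)..l, g z) + (∫ z in l..t, g z) := by
      exact (intervalIntegral.integral_add_adjacent_intervals
        (hc.intervalIntegrable _ _) (hc.intervalIntegrable _ _)).symm
    have int3 : (∫ z in l..t, g z) = Real.exp (t-1) - Real.exp (l-1) := by
      rw [intervalIntegral.integral_congr (g := fun z => Real.exp (z-1)) ?_, exp_int]
      intro z hz
      rw [Set.uIcc_of_le hcase] at hz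
      exact hgexp z hz.1
    rw [hsplit, int3, int1 l hl0 le_rfl, hgexp t hcase, hE]
    ring
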